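/- arXiv:2205.04953 — 5 statements merged into one kernel-verified Lean document; each statement's English description precedes it below -/
import Mathlib

section
/- If graph G has a proper (p:q)-colouring and graph H has a proper (q:r)-colouring, then the strong product G ⊠ H has a proper (p:r)-colouring. -/
open SimpleGraph

/-- The strong product of two simple graphs. -/
def strongProd {α β : Type*} (G : SimpleGraph α) (H : SimpleGraph β) :
    SimpleGraph (α × β) where
  Adj x y := x ≠ y ∧ (x.1 = y.1 ∨ G.Adj x.1 y.1) ∧ (x.2 = y.2 ∨ H.Adj x.2 y.2)
  symm := ⟨fun x y => by
    rintro ⟨h1, h2, h3⟩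
    exact ⟨h1.symm, h2.imp Eq.symm (fun h => G.adj_symm h), h3.imp Eq.symm (fun h => H.adj_symm h)⟩⟩
  loopless := ⟨fun x => by simp⟩

/-- The strong product of a family of simple graphs. -/
def strongProdPi {d : ℕ} {V : Fin d → Type*} (G : ∀ i, SimpleGraph (V i)) :
    SimpleGraph (∀ i, V i) where
  Adj x y := x ≠ y ∧ ∀ i, x i = y i ∨ (G i).Adj (x i) (y i)
  symm := ⟨fun x y => fun ⟨h1, h2⟩ => ⟨h1.symm, fun i => (h2 i).imp Eq.symm (fun h => (G i).adj_symm h)⟩⟩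
  loopless := ⟨fun x => by simp⟩

/-- Every connected component of the subgraph of `G` induced on `S` has at most `c`
vertices. -/
def ClusterBound {α : Type*} (G : SimpleGraph α) (S : Set α) (c : ℕ) : Prop :=
  ∀ v : S, ((G.induce S).connectedComponentMk v).supp.ncard ≤ c

/-- `G` has a `k`-colouring with clustering `c`. -/
def HasClusteredColoring {α : Type*} (G : SimpleGraph α) (k c : ℕ) : Prop :=
  ∃ f : α → Fin k, ∀ i : Fin k, ClusterBound G {v | f v = i} c

/-- `f` is a `(p:q)`-colouring: each vertex gets a `q`-element subset of `Fin p`. -/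
def IsPQColoring {α : Type*} (p q : ℕ) (f : α → Finset (Fin p)) : Prop :=
  ∀ v, (f v).card = q

/-- `f` is a proper `(p:q)`-colouring of `G`. -/
def IsProperPQColoring {α : Type*} (G : SimpleGraph α) (p q : ℕ)
    (f : α → Finset (Fin p)) : Prop :=
  IsPQColoring p q f ∧ ∀ ⦃x y⦄, G.Adj x y → Disjoint (f x) (f y)

/-- The set-colouring `f` has clustering `c`: for each colour, each monochromatic
component has at most `c` vertices. -/
def PQClusterBound {α : Type*} (G : SimpleGraph α) {p : ℕ}
    (f : α → Finset (Fin p)) (c : ℕ) : Prop :=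
  ∀ i : Fin p, ClusterBound G {v | i ∈ f v} c

/-- `G` has a `(p:q)`-colouring with clustering `c`. -/
def HasPQClusteredColoring {α : Type*} (G : SimpleGraph α) (p q c : ℕ) : Prop :=
  ∃ f : α → Finset (Fin p), IsPQColoring p q f ∧ PQClusterBound G f c

/-- `ord` is a consistent `(p:q)`-colouring of `G` (each vertex's `q` colours are ordered,
with the `i`-th colour of `x` different from the `j`-th colour of `y` for every edge `xy`
and all distinct `i, j`). -/
def IsConsistentPQColoring {α : Type*} (G : SimpleGraph α) (p q : ℕ)
    (ord : α → Fin q → Fin p) : Prop :=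
  (∀ v, Function.Injective (ord v)) ∧
    ∀ ⦃x y⦄, G.Adj x y → ∀ i j : Fin q, i ≠ j → ord x i ≠ ord y j

/-- The colour set of a vertex in an ordered colouring. -/
def ordColors {α : Type*} {p q : ℕ} (ord : α → Fin q → Fin p) (v : α) : Finset (Fin p) :=
  Finset.image (ord v) Finset.univ

/-- `G` has a consistent `(p:q)`-colouring with clustering `c`. -/
def HasConsistentClusteredColoring {α : Type*} (G : SimpleGraph α) (p q c : ℕ) : Prop :=
  ∃ ord : α → Fin q → Fin p, IsConsistentPQColoring G p q ord ∧
    PQClusterBound G (ordColors ord) c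

/-- The fractional chromatic number of `G`: the infimum of `p/q` over proper
`(p:q)`-colourings of `G`. -/
noncomputable def fracChrom {α : Type*} (G : SimpleGraph α) : ℝ :=
  sInf {t : ℝ | ∃ p q : ℕ, 0 < q ∧
    (∃ f : α → Finset (Fin p), IsProperPQColoring G p q f) ∧ t = (p : ℝ) / q}

/-- The independence number of `G`. -/
noncomputable def indepNum {α : Type*} (G : SimpleGraph α) : ℕ :=
  sSup {n | ∃ s : Finset α, (∀ x ∈ s, ∀ y ∈ s, ¬ G.Adj x y) ∧ s.card = n}

theorem stmt3 {α β : Type*} (G : SimpleGraph α) (H : SimpleGraph β) (p q r : ℕ)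
    (hG : ∃ f : α → Finset (Fin p), IsProperPQColoring G p q f)
    (hH : ∃ g : β → Finset (Fin q), IsProperPQColoring H q r g) :
    ∃ h : α × β → Finset (Fin p), IsProperPQColoring (strongProd G H) p r h := by
  obtain ⟨f, hf, hfd⟩ := hG
  obtain ⟨g, hg, hgd⟩ := hH
  refine ⟨fun vx => (g vx.2).image (fun i => ((f vx.1).orderIsoOfFin (hf vx.1) i : Fin p)),
    fun vx => ?_, ?_⟩
  · rw [Finset.card_image_of_injective _ (fun i j hij => ?_), hg]
    exact (Finset.orderIsoOfFin _ _).injective (Subtype.ext hij)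
  · rintro ⟨v, x⟩ ⟨w, y⟩ ⟨hne, hvw, hxy⟩
    rw [Finset.disjoint_left]
    simp only [Finset.mem_image, Finset.mem_coe]
    rintro a ⟨i, hi, rfl⟩ ⟨j, hj, hij⟩
    rcases hvw with rfl | hvw
    · rcases hxy with rfl | hxy
      · exact hne rfl
      · have : i = j := by
          have := (Finset.orderIsoOfFin (f v) (hf v)).injective (Subtype.ext hij)
          exact this.symm
        subst this
        exact (Finset.disjoint_left.1 (hgd hxy) hi) hj
    · have h1 : ((f v).orderIsoOfFin (hf v) i : Fin p) ∈ f v :=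
        ((f v).orderIsoOfFin (hf v) i).2
      have h2 : ((f w).orderIsoOfFin (hf w) j : Fin p) ∈ f w :=
        ((f w).orderIsoOfFin (hf w) j).2
      rw [hij] at h2
      exact (Finset.disjoint_left.1 (hfd hvw) h1) h2
end

section
/- For all finite graphs G₁ and G₂, the fractional chromatic number of the strong product satisfies χ_f(G₁ ⊠ G₂) ≤ χ_f(G₁)·χ_f(G₂). -/
open SimpleGraph Pointwise

/-- Auxiliary: the defining set of `fracChrom`. -/
def fracSet {α : Type*} (G : SimpleGraph α) : Set ℝ :=
  {t : ℝ | ∃ p q : ℕ, 0 < q ∧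
    (∃ f : α → Finset (Fin p), IsProperPQColoring G p q f) ∧ t = (p : ℝ) / q}

lemma fracSet_nonneg {α : Type*} {G : SimpleGraph α} : ∀ t ∈ fracSet G, (0:ℝ) ≤ t := by
  rintro t ⟨p, q, hq, -, rfl⟩; positivity

lemma fracSet_bddBelow {α : Type*} (G : SimpleGraph α) : BddBelow (fracSet G) :=
  ⟨0, fun t ht => fracSet_nonneg t ht⟩

lemma fracSet_nonempty {α : Type*} [Fintype α] (G : SimpleGraph α) : (fracSet G).Nonempty := by
  refine ⟨(Fintype.card α : ℝ) / 1, Fintype.card α, 1, one_pos,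
    ⟨fun v => {Fintype.equivFin α v}, fun v => rfl, ?_⟩, by norm_num⟩
  intro x y h
  rw [Finset.disjoint_singleton]
  exact fun e => h.ne ((Fintype.equivFin α).injective e)

lemma fracSet_mul_mem {α β : Type*} {G₁ : SimpleGraph α} {G₂ : SimpleGraph β}
    {t₁ t₂ : ℝ} (h₁ : t₁ ∈ fracSet G₁) (h₂ : t₂ ∈ fracSet G₂) :
    t₁ * t₂ ∈ fracSet (strongProd G₁ G₂) := by
  obtain ⟨p₁, q₁, hq₁, ⟨f₁, hf₁card, hf₁⟩, rfl⟩ := h₁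
  obtain ⟨p₂, q₂, hq₂, ⟨f₂, hf₂card, hf₂⟩, rfl⟩ := h₂
  refine ⟨p₁ * p₂, q₁ * q₂, Nat.mul_pos hq₁ hq₂,
    ⟨fun v => (f₁ v.1 ×ˢ f₂ v.2).image finProdFinEquiv, ?_, ?_⟩, ?_⟩
  · intro v
    rw [Finset.card_image_of_injective _ finProdFinEquiv.injective, Finset.card_product,
      hf₁card, hf₂card]
  · rintro x y ⟨hne, h1, h2⟩
    have hd : Disjoint (f₁ x.1) (f₁ y.1) ∨ Disjoint (f₂ x.2) (f₂ y.2) := by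
      rcases h1 with h1 | h1
      · rcases h2 with h2 | h2
        · exact absurd (Prod.ext h1 h2) hne
        · exact Or.inr (hf₂ h2)
      · exact Or.inl (hf₁ h1)
    rw [Finset.disjoint_image finProdFinEquiv.injective, Finset.disjoint_left]
    rintro ⟨a, b⟩ hab hab'
    simp only [Finset.mem_product] at hab hab'
    rcases hd with h | h
    · exact (Finset.disjoint_left.1 h) hab.1 hab'.1
    · exact (Finset.disjoint_left.1 h) hab.2 hab'.2
  · have h1 : (q₁ : ℝ) ≠ 0 := Nat.cast_ne_zero.2 hq₁.ne'
    have h2 : (q₂ : ℝ) ≠ 0 := Nat.cast_ne_zero.2 hq₂.ne'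
    push_cast
    rw [div_mul_div_comm]

theorem stmt4 {α β : Type*} [Fintype α] [Fintype β] (G₁ : SimpleGraph α) (G₂ : SimpleGraph β) :
    fracChrom (strongProd G₁ G₂) ≤ fracChrom G₁ * fracChrom G₂ := by
  have hne₁ := fracSet_nonempty G₁
  have hne₂ := fracSet_nonempty G₂
  have hb₂ : 0 ≤ sInf (fracSet G₂) :=
    le_csInf hne₂ (fun b hb => fracSet_nonneg b hb)
  have key : ∀ t₁ ∈ fracSet G₁, ∀ t₂ ∈ fracSet G₂,
      fracChrom (strongProd G₁ G₂) ≤ t₁ * t₂ := fun t₁ h₁ t₂ h₂ =>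
    csInf_le (fracSet_bddBelow _) (fracSet_mul_mem h₁ h₂)
  have step1 : ∀ t₁ ∈ fracSet G₁,
      fracChrom (strongProd G₁ G₂) ≤ t₁ * sInf (fracSet G₂) := by
    intro t₁ h₁
    have ht₁ : 0 ≤ t₁ := fracSet_nonneg _ h₁
    have heq : t₁ * sInf (fracSet G₂) = sInf (t₁ • fracSet G₂) := by
      rw [Real.sInf_smul_of_nonneg ht₁, smul_eq_mul]
    rw [heq]
    refine le_csInf (hne₂.smul_set) ?_
    rintro b ⟨t₂, ht₂, rfl⟩
    simpa [smul_eq_mul] using key t₁ h₁ t₂ ht₂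
  have step2 : fracChrom (strongProd G₁ G₂) ≤ sInf (fracSet G₂) * sInf (fracSet G₁) := by
    have heq : sInf (fracSet G₂) * sInf (fracSet G₁)
        = sInf (sInf (fracSet G₂) • fracSet G₁) := by
      rw [Real.sInf_smul_of_nonneg hb₂, smul_eq_mul]
    rw [heq]
    refine le_csInf (hne₁.smul_set) ?_
    rintro b ⟨t₁, ht₁, rfl⟩
    simpa [smul_eq_mul, mul_comm] using step1 t₁ ht₁
  calc fracChrom (strongProd G₁ G₂) ≤ sInf (fracSet G₂) * sInf (fracSet G₁) := step2
    _ = fracChrom G₁ * fracChrom G₂ := mul_comm _ _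
end

section
/- If a graph G has a proper (p:q)-colouring and a graph H has a (q:r)-colouring with clustering c, then G ⊠ H has a (p:r)-colouring with clustering c. -/
open SimpleGraph

lemma strongProd_cluster_aux {α β : Type*} (G : SimpleGraph α) (H : SimpleGraph β) (c : ℕ)
    (S : Set (α × β)) (T : Set β) (a : α) (b : β) (hv : (a, b) ∈ S) (hbT : b ∈ T)
    (hmem1 : ∀ x : α × β, x ∈ S → x.1 = a → x.2 ∈ T)
    (hmem2 : ∀ y : β, y ∈ T → (a, y) ∈ S)
    (hfirst : ∀ x1 x2 : α × β, x1 ∈ S → x2 ∈ S → (strongProd G H).Adj x1 x2 → x1.1 = x2.1)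
    (hclus : ClusterBound H T c) :
    (((strongProd G H).induce S).connectedComponentMk ⟨(a, b), hv⟩).supp.ncard ≤ c := by
  have Φinj : Function.Injective (fun y : T => (⟨(a, y.1), hmem2 y.1 y.2⟩ : S)) := by
    intro y1 y2 h
    apply Subtype.ext
    exact congrArg Prod.snd (congrArg Subtype.val h)
  have φmap : ∀ y1 y2 : T, (H.induce T).Adj y1 y2 →
      ((strongProd G H).induce S).Adj ⟨(a, y1.1), hmem2 y1.1 y1.2⟩
        ⟨(a, y2.1), hmem2 y2.1 y2.2⟩ := by
    intro y1 y2 hadj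
    have h' : H.Adj y1.1 y2.1 := hadj
    refine ⟨?_, Or.inl rfl, Or.inr h'⟩
    intro hEq
    exact H.ne_of_adj h' (congrArg Prod.snd hEq)
  let φ : (H.induce T) →g ((strongProd G H).induce S) :=
    ⟨fun y => ⟨(a, y.1), hmem2 y.1 y.2⟩, fun {y1 y2} h => φmap y1 y2 h⟩
  have key : ∀ (x1 x2 : S), ((strongProd G H).induce S).Walk x1 x2 → x1.1.1 = a →
      ∃ (h1 : x1.1.2 ∈ T) (h2 : x2.1.2 ∈ T), x2.1.1 = a ∧
        (H.induce T).Reachable ⟨x1.1.2, h1⟩ ⟨x2.1.2, h2⟩ := by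
    intro x1 x2 w
    induction w with
    | nil =>
      intro h1
      exact ⟨hmem1 _ (Subtype.mem _) h1, hmem1 _ (Subtype.mem _) h1, h1, Reachable.refl _⟩
    | @cons u v' x2' hadj p ih =>
      intro hu
      have hadj' : (strongProd G H).Adj u.1 v'.1 := hadj
      obtain ⟨hne, hor1, hor2⟩ := hadj'
      have heq1 : u.1.1 = v'.1.1 := hfirst u.1 v'.1 u.2 v'.2 hadj
      have hva : v'.1.1 = a := heq1 ▸ hu
      have hH2 : H.Adj u.1.2 v'.1.2 := by
        rcases hor2 with h | h
        · exact absurd (Prod.ext heq1 h) hne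
        · exact h
      have huT : u.1.2 ∈ T := hmem1 _ u.2 hu
      have hvT : v'.1.2 ∈ T := hmem1 _ v'.2 hva
      obtain ⟨h1', h2', hx2a, hreach⟩ := ih hva
      refine ⟨huT, h2', hx2a, ?_⟩
      have hAdjT : (H.induce T).Adj ⟨u.1.2, huT⟩ ⟨v'.1.2, hvT⟩ := hH2
      exact (hAdjT.reachable).trans hreach
  have hsupp : (((strongProd G H).induce S).connectedComponentMk ⟨(a, b), hv⟩).supp =
      (fun y : T => (⟨(a, y.1), hmem2 y.1 y.2⟩ : S)) ''
        ((H.induce T).connectedComponentMk ⟨b, hbT⟩).supp := by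
    ext x
    simp only [SimpleGraph.ConnectedComponent.mem_supp_iff, Set.mem_image,
      SimpleGraph.ConnectedComponent.eq]
    constructor
    · intro hx
      obtain ⟨w⟩ := hx
      obtain ⟨h1, h2, hxa, hreach⟩ := key ⟨(a, b), hv⟩ x w.reverse rfl
      refine ⟨⟨x.1.2, h2⟩, hreach.symm, ?_⟩
      apply Subtype.ext
      exact Prod.ext hxa.symm rfl
    · rintro ⟨y, hy, rfl⟩
      exact SimpleGraph.Reachable.map φ hy
  rw [hsupp, Set.ncard_image_of_injective _ Φinj]
  exact hclus ⟨b, hbT⟩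

theorem stmt9 {α β : Type*} (G : SimpleGraph α) (H : SimpleGraph β) (p q r c : ℕ)
    (hG : ∃ f : α → Finset (Fin p), IsProperPQColoring G p q f)
    (hH : HasPQClusteredColoring H q r c) :
    HasPQClusteredColoring (strongProd G H) p r c := by
  obtain ⟨f, hfq, hfd⟩ := hG
  obtain ⟨g, hgr, hgc⟩ := hH
  set e : α → Fin q → Fin p := fun a j => ((f a).orderIsoOfFin (hfq a) j : Fin p) with he
  have he_inj : ∀ a, Function.Injective (e a) := by
    intro a x y hxy
    exact ((f a).orderIsoOfFin (hfq a)).injective (Subtype.ext hxy)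
  have he_mem : ∀ a j, e a j ∈ f a := fun a j => ((f a).orderIsoOfFin (hfq a) j).2
  refine ⟨fun x => (g x.2).image (e x.1), ?_, ?_⟩
  · intro x
    rw [Finset.card_image_of_injective _ (he_inj x.1), hgr x.2]
  · intro i v
    obtain ⟨j, hjb, hji⟩ := Finset.mem_image.1 v.2
    have hji' : e v.1.1 j = i := hji
    refine strongProd_cluster_aux G H c _ {y | j ∈ g y} v.1.1 v.1.2 v.2 hjb ?_ ?_ ?_
      (hgc j)
    · intro x hx hxa
      obtain ⟨j', hj', hj'i⟩ := Finset.mem_image.1 hx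
      have : e v.1.1 j' = e v.1.1 j := by
        rw [← hxa] at hji' ⊢
        rw [hj'i, hji']
      rwa [he_inj _ this] at hj'
    · intro y hy
      exact Finset.mem_image.2 ⟨j, hy, hji'⟩
    · intro x1 x2 hx1 hx2 hadj
      obtain ⟨j1, _, hj1⟩ := Finset.mem_image.1 hx1
      obtain ⟨j2, _, hj2⟩ := Finset.mem_image.1 hx2
      rcases hadj.2.1 with h | h
      · exact h
      · exfalso
        have hi1 : i ∈ f x1.1 := hj1 ▸ he_mem _ _
        have hi2 : i ∈ f x2.1 := hj2 ▸ he_mem _ _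
        exact Finset.disjoint_left.1 (hfd h) hi1 hi2
end

section
/- If a graph G has a k-colouring with clustering c and P is a path, then the strong product G ⊠ P has a (k+1)-colouring with clustering c·k. -/
open SimpleGraph

private lemma ccore {k : ℕ} (hk : 0 < k) {j j' av av' : ℕ} (ha : av < k) (ha' : av' < k)
    (hj : j' = j ∨ j' = j + 1)
    (hF : (j + k - (j + k - av) % k) % (k + 1) = (j' + k - (j' + k - av') % k) % (k + 1)) :
    av = av' ∧ (j + k - av) / k = (j' + k - av') / k := by
  set t := j + k - av with ht
  set t' := j' + k - av' with ht'
  set q := t / k with hq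
  set q' := t' / k with hq'
  have hdm : k * q + t % k = t := Nat.div_add_mod t k
  have hdm' : k * q' + t' % k = t' := Nat.div_add_mod t' k
  have hr : t % k < k := Nat.mod_lt _ hk
  have hr' : t' % k < k := Nat.mod_lt _ hk
  clear_value t t' q q'
  have e1 : j + k - t % k = k * q + av := by omega
  have e2 : j' + k - t' % k = k * q' + av' := by omega
  rw [e1, e2] at hF
  have h0 : Nat.ModEq (k + 1) (k * q + av) (k * q' + av') := hF
  have h1 : Nat.ModEq (k + 1) (k * q + av + (q + q')) (k * q' + av' + (q + q')) :=
    h0.add_right _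
  have e3 : k * q + av + (q + q') = (k + 1) * q + (av + q') := by ring
  have e4 : k * q' + av' + (q + q') = (k + 1) * q' + (av' + q) := by ring
  rw [e3, e4] at h1
  have h3 : Nat.ModEq (k + 1) ((k + 1) * q) ((k + 1) * q') := by
    show _ % _ = _ % _
    simp [Nat.mul_mod_right]
  have key : Nat.ModEq (k + 1) (av + q') (av' + q) := h3.add_left_cancel h1
  have hb1 : t' ≤ t + k := by omega
  have hb2 : t ≤ t' + k := by omega
  have hq1 : q' ≤ q + 1 := by
    have := Nat.div_le_div_right (c := k) hb1
    have := Nat.add_div_right t hk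
    omega
  have hq2 : q ≤ q' + 1 := by
    have := Nat.div_le_div_right (c := k) hb2
    have := Nat.add_div_right t' hk
    omega
  rcases Nat.lt_trichotomy q q' with hlt | heq | hgt
  · have hq' : q' = q + 1 := by omega
    subst hq'
    have key2 : Nat.ModEq (k + 1) (av + 1) av' := by
      have h5 : Nat.ModEq (k + 1) (av + 1 + q) (av' + q) := by
        have e : av + (q + 1) = av + 1 + q := by ring
        rwa [e] at key
      exact Nat.ModEq.add_right_cancel' q h5
    have hav : av + 1 = av' := by
      unfold Nat.ModEq at key2
      rwa [Nat.mod_eq_of_lt (by omega), Nat.mod_eq_of_lt (by omega)] at key2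
    have hle : t' ≤ t := by omega
    have := Nat.div_le_div_right (c := k) hle
    omega
  · refine ⟨?_, heq⟩
    have key2 : Nat.ModEq (k + 1) av av' := by
      rw [← heq] at key
      exact Nat.ModEq.add_right_cancel' q key
    unfold Nat.ModEq at key2
    rwa [Nat.mod_eq_of_lt (by omega), Nat.mod_eq_of_lt (by omega)] at key2
  · have hq'' : q = q' + 1 := by omega
    subst hq''
    have key2 : Nat.ModEq (k + 1) av (av' + 1) := by
      have h5 : Nat.ModEq (k + 1) (av + q') (av' + 1 + q') := by
        have e : av' + (q' + 1) = av' + 1 + q' := by ring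
        rwa [e] at key
      exact Nat.ModEq.add_right_cancel' q' h5
    have hav : av = av' + 1 := by
      unfold Nat.ModEq at key2
      rwa [Nat.mod_eq_of_lt (by omega), Nat.mod_eq_of_lt (by omega)] at key2
    have hle : t ≤ t' := by omega
    have := Nat.div_le_div_right (c := k) hle
    omega

private lemma ncard_sprod {α β : Type*} (A : Set α) (B : Set β) :
    (A ×ˢ B).ncard = A.ncard * B.ncard := by
  rw [← Nat.card_coe_set_eq, ← Nat.card_coe_set_eq, ← Nat.card_coe_set_eq, ← Nat.card_prod]
  exact Nat.card_congr (Equiv.Set.prod A B)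

theorem stmt14 {α : Type*} (G : SimpleGraph α) (k c n : ℕ)
    (h : HasClusteredColoring G k c) :
    HasClusteredColoring (strongProd G (SimpleGraph.pathGraph n)) (k + 1) (c * k) := by
  obtain ⟨f, hf⟩ := h
  rcases Nat.eq_zero_or_pos k with hk0 | hk
  · subst hk0
    exact ⟨fun _ => 0, fun i v => (f v.1.1).elim0⟩
  · -- main case, k ≥ 1
    refine ⟨fun w => ⟨((w.2 : ℕ) + k - ((w.2 : ℕ) + k - (f w.1 : ℕ)) % k) % (k + 1),
      Nat.mod_lt _ (Nat.succ_pos k)⟩, ?_⟩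
    set F : α × Fin n → Fin (k + 1) := fun w =>
      ⟨((w.2 : ℕ) + k - ((w.2 : ℕ) + k - (f w.1 : ℕ)) % k) % (k + 1),
        Nat.mod_lt _ (Nat.succ_pos k)⟩ with hFdef
    intro i
    set S : Set (α × Fin n) := {v | F v = i} with hSdef
    set H := (strongProd G (SimpleGraph.pathGraph n)).induce S with hHdef
    intro w₀
    show (H.connectedComponentMk w₀).supp.ncard ≤ c * k
    -- adjacency unfolding
    have hadj' : ∀ {w w' : ↥S}, H.Adj w w' →
        (w.1 ≠ w'.1 ∧ (w.1.1 = w'.1.1 ∨ G.Adj w.1.1 w'.1.1) ∧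
          (w.1.2 = w'.1.2 ∨ (SimpleGraph.pathGraph n).Adj w.1.2 w'.1.2)) := fun h => h
    -- edge invariant
    have edge : ∀ {w w' : ↥S}, H.Adj w w' →
        (f w.1.1 : ℕ) = (f w'.1.1 : ℕ) ∧
        ((w.1.2 : ℕ) + k - (f w.1.1 : ℕ)) / k = ((w'.1.2 : ℕ) + k - (f w'.1.1 : ℕ)) / k := by
      intro w w' hA
      obtain ⟨hne, h1, h2⟩ := hadj' hA
      have hFF : ((w.1.2 : ℕ) + k - ((w.1.2 : ℕ) + k - (f w.1.1 : ℕ)) % k) % (k + 1)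
          = ((w'.1.2 : ℕ) + k - ((w'.1.2 : ℕ) + k - (f w'.1.1 : ℕ)) % k) % (k + 1) := by
        have hmem : F w.1 = i := w.2
        have hmem' : F w'.1 = i := w'.2
        have := congrArg (fun x : Fin (k + 1) => (x : ℕ)) (hmem.trans hmem'.symm)
        simpa [hFdef] using this
      have ha := (f w.1.1).isLt
      have ha' := (f w'.1.1).isLt
      rcases h2 with he | hpa
      · have hje : (w'.1.2 : ℕ) = (w.1.2 : ℕ) := by rw [he]
        exact ccore hk ha ha' (Or.inl hje) hFF
      · rw [SimpleGraph.pathGraph_adj] at hpa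
        rcases hpa with hA1 | hB1
        · exact ccore hk ha ha' (Or.inr hA1.symm) hFF
        · have := ccore hk ha' ha (Or.inr hB1.symm) hFF.symm
          exact ⟨this.1.symm, this.2.symm⟩
    -- reachability invariant
    have reachInv : ∀ {w w' : ↥S}, H.Reachable w w' →
        (f w.1.1 : ℕ) = (f w'.1.1 : ℕ) ∧
        ((w.1.2 : ℕ) + k - (f w.1.1 : ℕ)) / k = ((w'.1.2 : ℕ) + k - (f w'.1.1 : ℕ)) / k := by
      intro w w' hr
      obtain ⟨p⟩ := hr
      induction p with
      | nil => exact ⟨rfl, rfl⟩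
      | cons hA p ih =>
        obtain ⟨e1, e2⟩ := edge hA
        exact ⟨e1.trans ih.1, e2.trans ih.2⟩
    -- membership of lifted vertices
    have memS : ∀ v : α, f v = f w₀.1.1 → ((v, w₀.1.2) : α × Fin n) ∈ S := by
      intro v hv
      show F (v, w₀.1.2) = i
      have he : F (v, w₀.1.2) = F (w₀.1.1, w₀.1.2) := by
        apply Fin.ext
        simp [hFdef, hv]
      rw [he]
      exact w₀.2
    -- projection of walks
    have proj : ∀ {w w' : ↥S} (p : H.Walk w w') (hv : f w.1.1 = f w₀.1.1)
        (hv' : f w'.1.1 = f w₀.1.1),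
        (G.induce {v : α | f v = f w₀.1.1}).Reachable ⟨w.1.1, hv⟩ ⟨w'.1.1, hv'⟩ := by
      intro w w' p
      induction p with
      | nil => intro hv hv'; exact SimpleGraph.Reachable.refl _
      | @cons x y z hA p ih =>
        intro hv hv'
        have hy : f y.1.1 = f w₀.1.1 := by
          have h1 := (edge hA).1
          have h2 : f x.1.1 = f y.1.1 := Fin.val_injective h1
          rw [← h2]; exact hv
        have ih' := ih hy hv'
        obtain ⟨hne, h1, h2⟩ := hadj' hA
        rcases h1 with heq | hGadj
        · have hxy : (⟨x.1.1, hv⟩ : ↥{v : α | f v = f w₀.1.1}) = ⟨y.1.1, hy⟩ := Subtype.ext heq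
          rw [hxy]; exact ih'
        · refine SimpleGraph.Reachable.trans (SimpleGraph.Adj.reachable ?_) ih'
          exact hGadj
    -- lifting of walks
    have lift : ∀ {x y : ↥{v : α | f v = f w₀.1.1}},
        (G.induce {v : α | f v = f w₀.1.1}).Reachable x y →
        H.Reachable ⟨(x.1, w₀.1.2), memS x.1 x.2⟩ ⟨(y.1, w₀.1.2), memS y.1 y.2⟩ := by
      intro x y hr
      obtain ⟨p⟩ := hr
      induction p with
      | nil => exact SimpleGraph.Reachable.refl _
      | @cons x y z hA p ih =>
        refine SimpleGraph.Reachable.trans (SimpleGraph.Adj.reachable ?_) ih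
        have hGxy : G.Adj x.1 y.1 := hA
        show (strongProd G (SimpleGraph.pathGraph n)).Adj (x.1, w₀.1.2) (y.1, w₀.1.2)
        refine ⟨?_, Or.inr hGxy, Or.inl rfl⟩
        intro hc
        exact hGxy.ne (congrArg Prod.fst hc)
    set K := H.connectedComponentMk w₀ with hKdef
    have memK : ∀ w : ↥S, w ∈ K.supp ↔ H.Reachable w w₀ := by
      intro w
      rw [SimpleGraph.ConnectedComponent.mem_supp_iff, hKdef,
        SimpleGraph.ConnectedComponent.eq]
    by_cases hfin : K.supp.Finite
    · -- finite case
      set X := ((G.induce {v : α | f v = f w₀.1.1}).connectedComponentMk ⟨w₀.1.1, rfl⟩).supp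
        with hXdef
      have hX : X.ncard ≤ c := hf (f w₀.1.1) ⟨w₀.1.1, rfl⟩
      have hXK : ∀ x : ↥{v : α | f v = f w₀.1.1}, x ∈ X →
          (⟨(x.1, w₀.1.2), memS x.1 x.2⟩ : ↥S) ∈ K.supp := by
        intro x hx
        rw [memK]
        have hx' : (G.induce {v : α | f v = f w₀.1.1}).Reachable x ⟨w₀.1.1, rfl⟩ := by
          rw [hXdef, SimpleGraph.ConnectedComponent.mem_supp_iff] at hx
          exact SimpleGraph.ConnectedComponent.eq.mp hx
        exact lift hx'
      have hXfin : X.Finite := by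
        by_contra hXinf
        have himg : ((fun x : ↥{v : α | f v = f w₀.1.1} =>
            (⟨(x.1, w₀.1.2), memS x.1 x.2⟩ : ↥S)) '' X).Infinite := by
          apply Set.Infinite.image ?_ hXinf
          intro x _ y _ he
          apply Subtype.ext
          have he' : ((x.1, w₀.1.2) : α × Fin n) = (y.1, w₀.1.2) := congrArg Subtype.val he
          exact congrArg Prod.fst he'
        have hsub : ((fun x : ↥{v : α | f v = f w₀.1.1} =>
            (⟨(x.1, w₀.1.2), memS x.1 x.2⟩ : ↥S)) '' X) ⊆ K.supp := by
          rintro _ ⟨x, hx, rfl⟩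
          exact hXK x hx
        exact (himg.mono hsub) hfin
      set q₀ := ((w₀.1.2 : ℕ) + k - (f w₀.1.1 : ℕ)) / k with hq₀def
      set lo := k * q₀ + (f w₀.1.1 : ℕ) - k with hlodef
      set T := ((Subtype.val '' X) ×ˢ (Set.Ico lo (lo + k)) : Set (α × ℕ)) with hTdef
      have hTfin : T.Finite := (hXfin.image _).prod (Set.finite_Ico _ _)
      have hmaps : ∀ w : ↥S, w ∈ K.supp → (w.1.1, (w.1.2 : ℕ)) ∈ T := by
        intro w hw
        rw [memK] at hw
        obtain ⟨hfe, hde⟩ := reachInv hw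
        have hC : f w.1.1 = f w₀.1.1 := Fin.val_injective hfe
        constructor
        · obtain ⟨p⟩ := hw
          have hreach := proj p hC rfl
          refine ⟨⟨w.1.1, hC⟩, ?_, rfl⟩
          rw [hXdef, SimpleGraph.ConnectedComponent.mem_supp_iff]
          exact SimpleGraph.ConnectedComponent.sound hreach
        · have hde' : ((w.1.2 : ℕ) + k - (f w₀.1.1 : ℕ)) / k = q₀ := by
            rw [← hfe]
            exact hde
          have h1 := Nat.div_add_mod ((w.1.2 : ℕ) + k - (f w₀.1.1 : ℕ)) k
          rw [hde'] at h1
          have h2 : ((w.1.2 : ℕ) + k - (f w₀.1.1 : ℕ)) % k < k := Nat.mod_lt _ hk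
          have ha0 : (f w₀.1.1 : ℕ) < k := (f w₀.1.1).isLt
          simp only [Set.mem_Ico]
          omega
      have hinj : Set.InjOn (fun w : ↥S => (w.1.1, (w.1.2 : ℕ))) K.supp := by
        intro w _ w' _ he
        have he' : (w.1.1, (w.1.2 : ℕ)) = (w'.1.1, (w'.1.2 : ℕ)) := he
        apply Subtype.ext
        have h1 : w.1.1 = w'.1.1 := congrArg (Prod.fst : α × ℕ → α) he'
        have h2 : (w.1.2 : ℕ) = (w'.1.2 : ℕ) := congrArg (Prod.snd : α × ℕ → ℕ) he'
        exact Prod.ext_iff.mpr ⟨h1, Fin.val_injective h2⟩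
      have hcount := Set.ncard_le_ncard_of_injOn _ hmaps hinj hTfin
      have hTcard : T.ncard = X.ncard * k := by
        rw [hTdef, ncard_sprod, Set.ncard_image_of_injective _ Subtype.val_injective]
        congr 1
        rw [← Finset.coe_Ico, Set.ncard_coe_finset, Nat.card_Ico]
        omega
      rw [hTcard] at hcount
      exact hcount.trans (Nat.mul_le_mul_right k hX)
    · rw [Set.Infinite.ncard hfin]
      exact Nat.zero_le _
end

section
/- For groups of colourings in the strong product C₅ ⊠ C₅: the independence number α(C₅ ⊠ C₅) = 5, and hence χ_f(C₅ ⊠ C₅) = χ(C₅ ⊠ C₅) = 5. -/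
open SimpleGraph

instance : DecidableRel (strongProd (SimpleGraph.cycleGraph 5) (SimpleGraph.cycleGraph 5)).Adj :=
  fun x y => inferInstanceAs (Decidable (_ ∧ _ ∧ _))

lemma c5adj : ∀ i : Fin 5, (cycleGraph 5).Adj i (i+1) := by decide
lemma c5ne : ∀ i : Fin 5, i ≠ i + 1 := by decide
lemma indepC5 : ∀ s : Finset (Fin 5), (∀ x ∈ s, ∀ y ∈ s, x ≠ y → ¬(cycleGraph 5).Adj x y) → s.card ≤ 2 := by decide

lemma alpha_le (s : Finset (Fin 5 × Fin 5))
    (h : ∀ x ∈ s, ∀ y ∈ s, ¬ (strongProd (SimpleGraph.cycleGraph 5) (SimpleGraph.cycleGraph 5)).Adj x y) :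
    s.card ≤ 5 := by
  set c : Fin 5 → ℕ := fun i => (s.filter (fun v => v.1 = i)).card with hc
  have key : ∀ i : Fin 5, c i + c (i+1) ≤ 2 := by
    intro i
    set A := (s.filter (fun v => v.1 = i)).image Prod.snd with hA
    set B := (s.filter (fun v => v.1 = i+1)).image Prod.snd with hB
    have memA : ∀ x ∈ A, (i, x) ∈ s := by
      intro x hx
      obtain ⟨v, hv, rfl⟩ := Finset.mem_image.mp hx
      obtain ⟨hv1, hv2⟩ := Finset.mem_filter.mp hv
      rw [← hv2]; rwa [Prod.mk.eta]
    have memB : ∀ x ∈ B, (i+1, x) ∈ s := by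
      intro x hx
      obtain ⟨v, hv, rfl⟩ := Finset.mem_image.mp hx
      obtain ⟨hv1, hv2⟩ := Finset.mem_filter.mp hv
      rw [← hv2]; rwa [Prod.mk.eta]
    have hdisj : Disjoint A B := by
      rw [Finset.disjoint_left]
      intro x hxA hxB
      exact h _ (memA x hxA) _ (memB x hxB)
        ⟨by simp [Prod.ext_iff, c5ne i], Or.inr (c5adj i), Or.inl rfl⟩
    have hcardA : A.card = c i := Finset.card_image_of_injOn (by
      intro u hu v hv huv
      have hu2 := (Finset.mem_filter.mp hu).2
      have hv2 := (Finset.mem_filter.mp hv).2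
      exact Prod.ext (hu2.trans hv2.symm) huv)
    have hcardB : B.card = c (i+1) := Finset.card_image_of_injOn (by
      intro u hu v hv huv
      have hu2 := (Finset.mem_filter.mp hu).2
      have hv2 := (Finset.mem_filter.mp hv).2
      exact Prod.ext (hu2.trans hv2.symm) huv)
    have hindep : ∀ x ∈ A ∪ B, ∀ y ∈ A ∪ B, x ≠ y → ¬(cycleGraph 5).Adj x y := by
      intro x hx y hy hxy hadj
      rcases Finset.mem_union.mp hx with hx | hx <;>
        rcases Finset.mem_union.mp hy with hy | hy
      · exact h _ (memA x hx) _ (memA y hy)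
          ⟨by simp [Prod.ext_iff, hxy], Or.inl rfl, Or.inr hadj⟩
      · exact h _ (memA x hx) _ (memB y hy)
          ⟨by simp [Prod.ext_iff, c5ne i], Or.inr (c5adj i), Or.inr hadj⟩
      · exact h _ (memB x hx) _ (memA y hy)
          ⟨by simp [Prod.ext_iff, (c5ne i).symm], Or.inr (c5adj i).symm, Or.inr hadj⟩
      · exact h _ (memB x hx) _ (memB y hy)
          ⟨by simp [Prod.ext_iff, hxy], Or.inl rfl, Or.inr hadj⟩
    have := indepC5 (A ∪ B) hindep
    rwa [Finset.card_union_of_disjoint hdisj, hcardA, hcardB] at this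
  have hsum : s.card = ∑ i : Fin 5, c i :=
    Finset.card_eq_sum_card_fiberwise (fun v _ => Finset.mem_univ v.1)
  have h2 : 2 * s.card ≤ 10 := by
    have h3 : ∑ i : Fin 5, (c i + c (i+1)) ≤ ∑ _i : Fin 5, 2 :=
      Finset.sum_le_sum (fun i _ => key i)
    have hshift : ∑ i : Fin 5, c (i+1) = ∑ i : Fin 5, c i :=
      Fintype.sum_equiv (Equiv.addRight 1) _ _ (fun i => rfl)
    rw [Finset.sum_add_distrib, hshift] at h3
    simpa [hsum, two_mul] using h3
  omega

def diag : Finset (Fin 5 × Fin 5) := (Finset.univ : Finset (Fin 5)).image (fun i => (i, 2*i))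

lemma diag_card : diag.card = 5 := by decide

lemma diag_indep : ∀ x ∈ diag, ∀ y ∈ diag,
    ¬ (strongProd (SimpleGraph.cycleGraph 5) (SimpleGraph.cycleGraph 5)).Adj x y := by decide

def col : Fin 5 × Fin 5 → Fin 5 := fun v => v.1 + 2*v.2

lemma col_proper : ∀ x y, (strongProd (SimpleGraph.cycleGraph 5) (SimpleGraph.cycleGraph 5)).Adj x y →
    col x ≠ col y := by decide

lemma class_card_le {p : ℕ} (f : Fin 5 × Fin 5 → Finset (Fin p))
    (hprop : ∀ ⦃x y⦄, (strongProd (SimpleGraph.cycleGraph 5) (SimpleGraph.cycleGraph 5)).Adj x y →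
      Disjoint (f x) (f y)) (i : Fin p) :
    (Finset.univ.filter (fun v => i ∈ f v)).card ≤ 5 := by
  apply alpha_le
  intro x hx y hy hadj
  have hix : i ∈ f x := (Finset.mem_filter.mp hx).2
  have hiy : i ∈ f y := (Finset.mem_filter.mp hy).2
  exact (Finset.disjoint_left.mp (hprop hadj) hix) hiy

lemma count_le {p q : ℕ} (f : Fin 5 × Fin 5 → Finset (Fin p))
    (hq : ∀ v, (f v).card = q)
    (hprop : ∀ ⦃x y⦄, (strongProd (SimpleGraph.cycleGraph 5) (SimpleGraph.cycleGraph 5)).Adj x y →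
      Disjoint (f x) (f y)) : 25 * q ≤ 5 * p := by
  have h1 : ∑ i : Fin p, (Finset.univ.filter (fun v => i ∈ f v)).card = 25 * q := by
    have : ∀ i : Fin p, (Finset.univ.filter (fun v => i ∈ f v)).card
        = ∑ v : Fin 5 × Fin 5, if i ∈ f v then 1 else 0 := fun i => Finset.card_filter _ _
    rw [Finset.sum_congr rfl (fun i _ => this i), Finset.sum_comm]
    have h2 : ∀ v : Fin 5 × Fin 5, ∑ i : Fin p, (if i ∈ f v then 1 else 0) = q := by
      intro v
      rw [← Finset.card_filter, Finset.filter_univ_mem, hq]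
    rw [Finset.sum_congr rfl (fun v _ => h2 v)]
    simp [Finset.card_univ]
  calc 25 * q = ∑ i : Fin p, (Finset.univ.filter (fun v => i ∈ f v)).card := h1.symm
    _ ≤ ∑ _i : Fin p, 5 := Finset.sum_le_sum (fun i _ => class_card_le f hprop i)
    _ = 5 * p := by simp [mul_comm]


theorem stmt18 :
    _root_.indepNum (strongProd (SimpleGraph.cycleGraph 5) (SimpleGraph.cycleGraph 5)) = 5 ∧
      fracChrom (strongProd (SimpleGraph.cycleGraph 5) (SimpleGraph.cycleGraph 5)) = 5 ∧
      (strongProd (SimpleGraph.cycleGraph 5) (SimpleGraph.cycleGraph 5)).chromaticNumber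
        = 5 := by
  refine ⟨?_, ?_, ?_⟩
  · -- independence number
    unfold _root_.indepNum
    apply le_antisymm
    · refine csSup_le ?_ ?_
      · exact ⟨5, diag, diag_indep, diag_card⟩
      · rintro n ⟨s, hs, rfl⟩
        exact alpha_le s hs
    · refine le_csSup ?_ ?_
      · refine ⟨5, ?_⟩
        rintro n ⟨s, hs, rfl⟩
        exact alpha_le s hs
      · exact ⟨diag, diag_indep, diag_card⟩
  · -- fractional chromatic number
    apply IsLeast.csInf_eq
    constructor
    · exact ⟨5, 1, one_pos, ⟨fun v => {col v}, fun v => rfl,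
        fun x y hxy => Finset.disjoint_singleton.mpr (col_proper x y hxy)⟩, by norm_num⟩
    · rintro t ⟨p, q, hq, ⟨f, hcard, hprop⟩, rfl⟩
      have h := count_le f hcard hprop
      rw [le_div_iff₀ (by exact_mod_cast hq)]
      have : 5 * q ≤ p := by omega
      exact_mod_cast this
  · -- chromatic number
    have hcol : (strongProd (SimpleGraph.cycleGraph 5) (SimpleGraph.cycleGraph 5)).Colorable 5 :=
      ⟨SimpleGraph.Coloring.mk col (fun hadj => col_proper _ _ hadj)⟩
    apply le_antisymm hcol.chromaticNumber_le
    by_contra hlt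
    push_neg at hlt
    have h4 : (strongProd (SimpleGraph.cycleGraph 5) (SimpleGraph.cycleGraph 5)).chromaticNumber ≤ 4 := by
      have := Order.le_of_lt_add_one (by exact_mod_cast hlt :
        (strongProd (SimpleGraph.cycleGraph 5) (SimpleGraph.cycleGraph 5)).chromaticNumber < (4 : ℕ∞) + 1)
      exact_mod_cast this
    obtain ⟨C⟩ := chromaticNumber_le_iff_colorable.mp h4
    have hsum : (Finset.univ : Finset (Fin 5 × Fin 5)).card
        = ∑ i : Fin 4, (Finset.univ.filter (fun v => C v = i)).card :=
      Finset.card_eq_sum_card_fiberwise (fun v _ => Finset.mem_univ (C v))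
    have hle : ∀ i : Fin 4, (Finset.univ.filter (fun v => C v = i)).card ≤ 5 := by
      intro i
      apply alpha_le
      intro x hx y hy hadj
      exact C.valid hadj ((Finset.mem_filter.mp hx).2.trans (Finset.mem_filter.mp hy).2.symm)
    have : (Finset.univ : Finset (Fin 5 × Fin 5)).card ≤ ∑ _i : Fin 4, 5 :=
      hsum ▸ Finset.sum_le_sum (fun i _ => hle i)
    simp [Finset.card_univ] at this
end
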